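/- Let ℓ: ℝ^p → ℝ be convex and differentiable, a ∈ (0,1), λ > 0, and let β̂ be a minimizer over ℝ^p of β ↦ ℓ(β) + λ Σ_{k=1}^r ‖W_k β_k‖. If |W^{-1} ∇ℓ(β°)|_∞ ≤ aλ, then v := β̂ − β° belongs to the cone C_{a,W} = {v ∈ ℝ^p : Σ_{k ∉ S} ‖W_k v_k‖ ≤ Σ_{k ∈ S} ‖W_k v_k‖ + a|Wv|_1}. -/

import Mathlib

open scoped BigOperators Classical

/-- The group norm `‖W_k β_k‖`. -/
noncomputable def groupNorm {r : ℕ} {p : Fin r → ℕ}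
    (w β : ((k : Fin r) × Fin (p k)) → ℝ) (k : Fin r) : ℝ :=
  Real.sqrt (∑ j : Fin (p k), (w ⟨k, j⟩ * β ⟨k, j⟩) ^ 2)

/-- Coordinate `c` of the gradient `∇ℓ(β)`. -/
noncomputable def gradCoord {r : ℕ} {p : Fin r → ℕ}
    (ℓ : (((k : Fin r) × Fin (p k)) → ℝ) → ℝ)
    (β : ((k : Fin r) × Fin (p k)) → ℝ) (c : (k : Fin r) × Fin (p k)) : ℝ :=
  fderiv ℝ ℓ β (Pi.single c 1)

/-- Membership in the cone `C_{a,W}` (relative to the support `S` of `βo`):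
`∑_{k ∉ S} ‖W_k v_k‖ ≤ ∑_{k ∈ S} ‖W_k v_k‖ + a |W v|₁`, where
`S = {k : βo_k ≠ 0}`. -/
def InCone {r : ℕ} {p : Fin r → ℕ}
    (βo w : ((k : Fin r) × Fin (p k)) → ℝ) (a : ℝ)
    (v : ((k : Fin r) × Fin (p k)) → ℝ) : Prop :=
  ∑ k : Fin r, (if ∀ j : Fin (p k), βo ⟨k, j⟩ = 0 then groupNorm w v k else 0)
    ≤ ∑ k : Fin r, (if ∀ j : Fin (p k), βo ⟨k, j⟩ = 0 then 0 else groupNorm w v k)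
      + a * ∑ c, |w c * v c|

lemma groupNorm_eq_norm {r : ℕ} {p : Fin r → ℕ}
    (w β : ((k : Fin r) × Fin (p k)) → ℝ) (k : Fin r) :
    groupNorm w β k
      = ‖(WithLp.equiv 2 (Fin (p k) → ℝ)).symm (fun j => w ⟨k, j⟩ * β ⟨k, j⟩)‖ := by
  rw [EuclideanSpace.norm_eq]
  simp [groupNorm, Real.norm_eq_abs, mul_pow, sq_abs]

lemma groupNorm_sub_le {r : ℕ} {p : Fin r → ℕ}
    (w βh βo : ((k : Fin r) × Fin (p k)) → ℝ) (k : Fin r) :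
    groupNorm w βo k - groupNorm w βh k
      ≤ groupNorm w (fun c => βh c - βo c) k := by
  rw [groupNorm_eq_norm, groupNorm_eq_norm, groupNorm_eq_norm]
  have h : (WithLp.equiv 2 (Fin (p k) → ℝ)).symm (fun j => w ⟨k, j⟩ * (βh ⟨k, j⟩ - βo ⟨k, j⟩))
      = (WithLp.equiv 2 (Fin (p k) → ℝ)).symm (fun j => w ⟨k, j⟩ * βh ⟨k, j⟩)
        - (WithLp.equiv 2 (Fin (p k) → ℝ)).symm (fun j => w ⟨k, j⟩ * βo ⟨k, j⟩) := by
    ext j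
    show w ⟨k, j⟩ * (βh ⟨k, j⟩ - βo ⟨k, j⟩)
      = w ⟨k, j⟩ * βh ⟨k, j⟩ - w ⟨k, j⟩ * βo ⟨k, j⟩
    ring
  rw [h, norm_sub_rev]
  exact norm_sub_norm_le _ _

/-- If `β̂` minimizes the Group Lasso objective and `|W⁻¹ ∇ℓ(β°)|_∞ ≤ aλ`,
then `v = β̂ − β°` belongs to the cone `C_{a,W}`. -/
theorem groupLasso_cone_membership {r : ℕ} {p : Fin r → ℕ}
    (ℓ : (((k : Fin r) × Fin (p k)) → ℝ) → ℝ)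
    (hconv : ConvexOn ℝ Set.univ ℓ) (hdiff : Differentiable ℝ ℓ)
    (w : ((k : Fin r) × Fin (p k)) → ℝ) (hw : ∀ c, 0 < w c)
    (a : ℝ) (ha : a ∈ Set.Ioo (0 : ℝ) 1)
    (lam : ℝ) (hlam : 0 < lam)
    (βhat βo : ((k : Fin r) × Fin (p k)) → ℝ)
    (hmin : ∀ β : ((k : Fin r) × Fin (p k)) → ℝ,
      ℓ βhat + lam * ∑ k : Fin r, groupNorm w βhat k
        ≤ ℓ β + lam * ∑ k : Fin r, groupNorm w β k)
    (hgrad : (⨆ c : (k : Fin r) × Fin (p k), |gradCoord ℓ βo c / w c|) ≤ a * lam) :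
    InCone βo w a (fun c => βhat c - βo c) := by
  classical
  set v : ((k : Fin r) × Fin (p k)) → ℝ := fun c => βhat c - βo c with hv
  set T : ℝ := ∑ c, |w c * v c| with hT
  -- derivative of t ↦ ℓ (βo + t • v) at 0
  have hD : HasDerivAt (fun t : ℝ => ℓ (βo + t • v)) (fderiv ℝ ℓ βo v) 0 := by
    have h1 : HasDerivAt (fun t : ℝ => βo + t • v) v 0 := by
      simpa using (HasDerivAt.const_add βo ((hasDerivAt_id (0 : ℝ)).smul_const v))
    have h2 : HasFDerivAt ℓ (fderiv ℝ ℓ βo) ((fun t : ℝ => βo + t • v) 0) := by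
      simpa using (hdiff βo).hasFDerivAt
    exact h2.comp_hasDerivAt 0 h1
  -- convexity of the restriction
  have hgc : ConvexOn ℝ Set.univ (fun t : ℝ => ℓ (βo + t • v)) := by
    refine ⟨convex_univ, fun x _ y _ b c hb hc hbc => ?_⟩
    have h := hconv.2 (Set.mem_univ (βo + x • v)) (Set.mem_univ (βo + y • v)) hb hc hbc
    have heq : βo + (b • x + c • y) • v = b • (βo + x • v) + c • (βo + y • v) := by
      funext d
      show βo d + (b * x + c * y) * v d
        = b * (βo d + x * v d) + c * (βo d + y * v d)
      linear_combination (-(βo d)) * hbc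
    show ℓ (βo + (b • x + c • y) • v) ≤ b • ℓ (βo + x • v) + c • ℓ (βo + y • v)
    rw [heq]
    simpa using h
  -- slope inequality: ∇ℓ(βo)·v ≤ ℓ(β̂) − ℓ(βo)
  have hDle : fderiv ℝ ℓ βo v ≤ ℓ βhat - ℓ βo := by
    have hs := hgc.le_slope_of_hasDerivAt (Set.mem_univ (0 : ℝ)) (Set.mem_univ (1 : ℝ))
      one_pos hD
    have h0 : βo + (0 : ℝ) • v = βo := by simp
    have h1 : βo + v = βhat := by funext d; simp [hv]
    have h1' : βo + (1 : ℝ) • v = βhat := by rw [one_smul, h1]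
    simpa [slope, h0, h1, h1'] using hs
  -- the directional derivative as a sum of coordinates
  have hsum : fderiv ℝ ℓ βo v = ∑ c, v c * gradCoord ℓ βo c := by
    have hveq : v = ∑ c, v c • (Pi.single c 1 : ((k : Fin r) × Fin (p k)) → ℝ) := by
      have : ∀ c, v c • (Pi.single c 1 : ((k : Fin r) × Fin (p k)) → ℝ)
          = Pi.single c (v c) := by
        intro c
        rw [← Pi.single_smul, smul_eq_mul, mul_one]
      simp_rw [this]
      exact (Finset.univ_sum_single v).symm
    conv_lhs => rw [hveq]
    rw [map_sum]
    refine Finset.sum_congr rfl fun c _ => ?_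
    rw [map_smul]
    simp [gradCoord]
  -- per-coordinate gradient bound
  have hgb : ∀ c, |gradCoord ℓ βo c / w c| ≤ a * lam := fun c =>
    le_trans (le_ciSup (f := fun c => |gradCoord ℓ βo c / w c|)
      (Set.Finite.bddAbove (Set.finite_range _)) c) hgrad
  -- ℓ(βo) − ℓ(β̂) ≤ lam * (a * T)
  have hlossle : ℓ βo - ℓ βhat ≤ lam * (a * T) := by
    have h2 : -(fderiv ℝ ℓ βo v) ≤ ∑ c, (a * lam) * |w c * v c| := by
      rw [hsum, ← Finset.sum_neg_distrib]
      refine Finset.sum_le_sum fun c _ => ?_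
      have habs : |v c * gradCoord ℓ βo c|
          = |gradCoord ℓ βo c / w c| * |w c * v c| := by
        rw [← abs_mul]
        congr 1
        have hwne : w c ≠ 0 := (hw c).ne'
        field_simp
      calc -(v c * gradCoord ℓ βo c) ≤ |v c * gradCoord ℓ βo c| := neg_le_abs _
        _ = |gradCoord ℓ βo c / w c| * |w c * v c| := habs
        _ ≤ (a * lam) * |w c * v c| :=
            mul_le_mul_of_nonneg_right (hgb c) (abs_nonneg _)
    have : ∑ c, (a * lam) * |w c * v c| = lam * (a * T) := by
      rw [← Finset.mul_sum, hT]; ring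
    linarith [hDle, h2, this.le, this.ge]
  -- the penalty inequality
  have hpen : ∑ k : Fin r, groupNorm w βhat k
      ≤ ∑ k : Fin r, groupNorm w βo k + a * T := by
    have h := hmin βo
    have h2 : lam * (∑ k : Fin r, groupNorm w βhat k)
        ≤ lam * (∑ k : Fin r, groupNorm w βo k + a * T) := by
      rw [mul_add]
      linarith [hlossle, h]
    exact le_of_mul_le_mul_left h2 hlam
  -- per-group comparison
  have hks : ∀ k : Fin r,
      (if ∀ j : Fin (p k), βo ⟨k, j⟩ = 0 then groupNorm w v k else 0)
        - (if ∀ j : Fin (p k), βo ⟨k, j⟩ = 0 then 0 else groupNorm w v k)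
      ≤ groupNorm w βhat k - groupNorm w βo k := by
    intro k
    by_cases hc : ∀ j : Fin (p k), βo ⟨k, j⟩ = 0
    · rw [if_pos hc, if_pos hc]
      have h1 : groupNorm w βo k = 0 := by simp [groupNorm, hc]
      have h2 : groupNorm w v k = groupNorm w βhat k := by
        unfold groupNorm
        congr 1
        refine Finset.sum_congr rfl fun j _ => ?_
        rw [hv]
        simp [hc j]
      rw [h1, h2]
    · rw [if_neg hc, if_neg hc]
      have := groupNorm_sub_le w βhat βo k
      rw [← hv] at this
      linarith
  have hsumks := Finset.sum_le_sum (s := Finset.univ) (fun k _ => hks k)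
  rw [Finset.sum_sub_distrib, Finset.sum_sub_distrib] at hsumks
  show InCone βo w a v
  unfold InCone
  rw [← hT]
  linarith [hsumks, hpen]
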